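/- For every integer k ≥ 2 there exists a finite simple graph G with pathwidth exactly k and hunter number h(G) = k + 1; that is, the bound h(G) ≤ pw(G) + 1 is tight for graphs of pathwidth at least 2. -/

import Mathlib

/-- A rabbit's strategy on `G`: `r i` is the rabbit's position after the `i`-th shot
(`r 0` is the initial position); the rabbit always moves along an edge. -/
def RabbitStrategy {V : Type*} (G : SimpleGraph V) (r : ℕ → V) : Prop :=
  ∀ i : ℕ, G.Adj (r i) (r (i + 1))

/-- `k` hunters have a winning strategy on `G` with respect to `S`: there is a sequence of
shots `Hs` (where `Hs i` is the set `H_{i+1}` of vertices shot in round `i + 1`), each of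
size at most `k`, such that every rabbit starting in `S` is eventually shot
(`r i ∈ Hs i` expresses the paper's condition `r_{i-1} ∈ H_i` for some `i ≥ 1`). -/
def HuntersWinWrt {V : Type*} (G : SimpleGraph V) (k : ℕ) (S : Set V) : Prop :=
  ∃ Hs : ℕ → Finset V, (∀ i, (Hs i).card ≤ k) ∧
    ∀ r : ℕ → V, RabbitStrategy G r → r 0 ∈ S → ∃ i, r i ∈ Hs i

/-- `k` hunters have a winning strategy on `G`. -/
def HuntersWin {V : Type*} (G : SimpleGraph V) (k : ℕ) : Prop :=
  HuntersWinWrt G k Set.univ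

/-- The hunter number `h(G)`: the minimum number of hunters having a winning strategy. -/
noncomputable def hunterNumber {V : Type*} (G : SimpleGraph V) : ℕ :=
  sInf {k | HuntersWin G k}

/-- A path decomposition of `G` with bags `X 0, ..., X (ℓ-1)`: the bags cover all vertices,
every edge is contained in some bag, and the bags containing any fixed vertex form an
interval. -/
def IsPathDecomp {V : Type*} (G : SimpleGraph V) (ℓ : ℕ) (X : ℕ → Finset V) : Prop :=
  (∀ v : V, ∃ i < ℓ, v ∈ X i) ∧
  (∀ u v : V, G.Adj u v → ∃ i < ℓ, u ∈ X i ∧ v ∈ X i) ∧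
  (∀ (v : V) (i j k : ℕ), i ≤ j → j ≤ k → k < ℓ → v ∈ X i → v ∈ X k → v ∈ X j)

/-- The pathwidth of `G`: the least `w` such that `G` has a path decomposition all of whose
bags have size at most `w + 1`. -/
noncomputable def pathwidth {V : Type*} (G : SimpleGraph V) : ℕ :=
  sInf {w | ∃ ℓ X, IsPathDecomp G ℓ X ∧ ∀ i < ℓ, (X i).card ≤ w + 1}

namespace HunterTight

/-- Adjacency of the `k`-th power of a path on `2k+2` vertices. -/
def Padj (k : ℕ) (a b : Fin (2*k+2)) : Prop :=
  a ≠ b ∧ a.val ≤ b.val + k ∧ b.val ≤ a.val + k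

instance (k : ℕ) (a b : Fin (2*k+2)) : Decidable (Padj k a b) := by
  unfold Padj; infer_instance

/-- The `k`-th power of a path on `2k+2` vertices. -/
def PG (k : ℕ) : SimpleGraph (Fin (2*k+2)) where
  Adj := Padj k
  symm := by constructor; intro a b ⟨h1, h2, h3⟩; exact ⟨h1.symm, h3, h2⟩
  loopless := by constructor; intro a ⟨h1, _⟩; exact h1 rfl

/-- Neighborhood as a Finset. -/
def NB (k : ℕ) (a : Fin (2*k+2)) : Finset (Fin (2*k+2)) :=
  Finset.univ.filter (fun x => Padj k a x)

lemma mem_NB {k : ℕ} {a x : Fin (2*k+2)} : x ∈ NB k a ↔ Padj k a x := by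
  simp [NB]

/-- The key combinatorial lemma: the union of the neighborhoods of any two
distinct vertices has at least `k+2` elements. -/
lemma pair_lemma {k : ℕ} (hk : 2 ≤ k) {u v : Fin (2*k+2)} (huv : u ≠ v) :
    k + 2 ≤ (NB k u ∪ NB k v).card := by
  -- reduce to val-level statement; wlog u.val < v.val
  wlog hlt : u.val < v.val generalizing u v
  · rw [Finset.union_comm]
    refine this huv.symm ?_
    rcases Nat.lt_or_ge u.val v.val with h | h
    · exact absurd h hlt
    · rcases Nat.lt_or_ge v.val u.val with h' | h'
      · exact h'
      · exact absurd (Fin.ext (le_antisymm h h')) huv.symm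
  have hu2 := u.isLt
  have hv2 := v.isLt
  by_cases hcase : v.val ≤ u.val + k
  · -- close case: explicit interval of k+2 vertices
    set a := min u.val k with ha
    have hbound : ∀ m ∈ Finset.Icc a (a + k + 1), m < 2*k+2 := by
      intro m hm; rw [Finset.mem_Icc] at hm; omega
    have hsub : (Finset.Icc a (a + k + 1)).attachFin hbound ⊆ NB k u ∪ NB k v := by
      intro x hx
      rw [Finset.mem_attachFin, Finset.mem_Icc] at hx
      rw [Finset.mem_union, mem_NB, mem_NB]
      unfold Padj
      simp only [Ne, Fin.ext_iff]
      omega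
    calc k + 2 = ((Finset.Icc a (a + k + 1)).attachFin hbound).card := by
          rw [Finset.card_attachFin, Nat.card_Icc]; omega
      _ ≤ _ := Finset.card_le_card hsub
  · -- far case: everything except u, v is a neighbor of one of them
    have hsub : Finset.univ \ {u, v} ⊆ NB k u ∪ NB k v := by
      intro x hx
      rw [Finset.mem_sdiff, Finset.mem_insert, Finset.mem_singleton] at hx
      push_neg at hx
      obtain ⟨-, hxu, hxv⟩ := hx
      rw [Finset.mem_union, mem_NB, mem_NB]
      unfold Padj
      simp only [Ne, Fin.ext_iff]
      have hxu' : x.val ≠ u.val := fun h => hxu (Fin.ext h)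
      have hxv' : x.val ≠ v.val := fun h => hxv (Fin.ext h)
      have := x.isLt
      omega
    have hcard : (Finset.univ \ ({u, v} : Finset (Fin (2*k+2)))).card = 2*k := by
      rw [Finset.card_sdiff_of_subset (Finset.subset_univ _), Finset.card_univ]
      rw [Finset.card_insert_of_notMem (by simpa using huv), Finset.card_singleton]
      simp
    calc k + 2 ≤ 2*k := by omega
      _ = _ := hcard.symm
      _ ≤ _ := Finset.card_le_card hsub

/-- Bags of the path decomposition (also the hunters' strategy). -/
def Bag (k i : ℕ) : Finset (Fin (2*k+2)) :=
  (Finset.Icc i (i+k) ∩ Finset.range (2*k+2)).attachFin (by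
    intro m hm
    rw [Finset.mem_inter, Finset.mem_range] at hm
    exact hm.2)

lemma mem_Bag {k i : ℕ} {x : Fin (2*k+2)} : x ∈ Bag k i ↔ i ≤ x.val ∧ x.val ≤ i + k := by
  unfold Bag
  rw [Finset.mem_attachFin, Finset.mem_inter, Finset.mem_Icc, Finset.mem_range]
  have := x.isLt
  constructor
  · rintro ⟨h, -⟩; exact h
  · intro h; exact ⟨h, this⟩

lemma card_Bag (k i : ℕ) : (Bag k i).card ≤ k + 1 := by
  unfold Bag
  rw [Finset.card_attachFin]
  calc (Finset.Icc i (i+k) ∩ Finset.range (2*k+2)).card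
      ≤ (Finset.Icc i (i+k)).card := Finset.card_le_card Finset.inter_subset_left
    _ = k + 1 := by rw [Nat.card_Icc]; omega

lemma bag_decomp (k : ℕ) : IsPathDecomp (PG k) (k+2) (Bag k) := by
  refine ⟨?_, ?_, ?_⟩
  · intro v
    refine ⟨min v.val (k+1), by omega, ?_⟩
    rw [mem_Bag]
    have := v.isLt
    omega
  · intro u v huv
    obtain ⟨hne, h1, h2⟩ := huv
    refine ⟨min (min u.val v.val) (k+1), by omega, ?_, ?_⟩ <;>
      (rw [mem_Bag]; have := u.isLt; have := v.isLt; omega)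
  · intro v i j k' hij hjk hkl hvi hvk
    rw [mem_Bag] at *
    omega

lemma pathwidth_PG (k : ℕ) : pathwidth (PG k) = k := by
  have hmem : k ∈ {w | ∃ ℓ X, IsPathDecomp (PG k) ℓ X ∧ ∀ i < ℓ, (X i).card ≤ w + 1} :=
    ⟨k+2, Bag k, bag_decomp k, fun i _ => card_Bag k i⟩
  refine le_antisymm (Nat.sInf_le hmem) (le_csInf ⟨k, hmem⟩ ?_)
  rintro w ⟨ℓ, X, ⟨hcov, hedge, hint⟩, hcard⟩
  classical
  -- the clique {0, ..., k} must lie in a common bag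
  set c : Fin (k+1) → Fin (2*k+2) := fun j => ⟨j.val, by omega⟩ with hc
  have hcov' : ∀ v : Fin (2*k+2), ∃ i, i < ℓ ∧ v ∈ X i := by
    intro v; obtain ⟨i, hi, hm⟩ := hcov v; exact ⟨i, hi, hm⟩
  have hcinj : Function.Injective c := by
    intro a b h
    apply Fin.ext
    have h' : ((c a : Fin (2*k+2))).val = (c b).val := congrArg Fin.val h
    exact h'
  obtain ⟨j0, -, hj0⟩ := Finset.exists_max_image Finset.univ
    (fun j : Fin (k+1) => Nat.find (hcov' (c j))) ⟨0, Finset.mem_univ 0⟩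
  set M := Nat.find (hcov' (c j0)) with hM
  have hMl : M < ℓ := (Nat.find_spec (hcov' (c j0))).1
  have hin : ∀ j, c j ∈ X M := by
    intro j
    by_cases hj : j = j0
    · subst hj; exact (Nat.find_spec (hcov' (c j))).2
    · have hadj : (PG k).Adj (c j) (c j0) := by
        refine ⟨fun h => hj (hcinj h), ?_, ?_⟩ <;>
          (simp only [hc]; omega)
      obtain ⟨q, hq, hjq, hj0q⟩ := hedge _ _ hadj
      have h1 : Nat.find (hcov' (c j)) ≤ M := hj0 j (Finset.mem_univ j)
      have h2 : M ≤ q := Nat.find_le ⟨hq, hj0q⟩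
      exact hint (c j) (Nat.find (hcov' (c j))) M q h1 h2 hq
        (Nat.find_spec (hcov' (c j))).2 hjq
  have : (Finset.univ : Finset (Fin (k+1))).card ≤ (X M).card :=
    Finset.card_le_card_of_injOn c (fun j _ => hin j) fun a _ b _ h => hcinj h
  have hXM := hcard M hMl
  simp only [Finset.card_univ, Fintype.card_fin] at this
  omega

/-- `k+1` hunters win: sweep the bags. -/
lemma hunters_win (k : ℕ) : HuntersWin (PG k) (k+1) := by
  refine ⟨Bag k, fun i => card_Bag k i, ?_⟩
  intro r hr _
  by_contra hno
  push_neg at hno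
  have key : ∀ t, t ≤ k + 1 → k + 1 + t ≤ (r t).val := by
    intro t
    induction t with
    | zero =>
      intro _
      have h0 : ¬(0 ≤ (r 0).val ∧ (r 0).val ≤ 0 + k) := fun h => hno 0 (mem_Bag.mpr h)
      omega
    | succ t ih =>
      intro ht
      have h1 := ih (by omega)
      obtain ⟨-, hb1, hb2⟩ := hr t
      have h2 : ¬(t+1 ≤ (r (t+1)).val ∧ (r (t+1)).val ≤ t+1+k) :=
        fun h => hno (t+1) (mem_Bag.mpr h)
      omega
  have := key (k+1) le_rfl
  have := (r (k+1)).isLt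
  omega

section Evasion

variable (k : ℕ) (Hs : ℕ → Finset (Fin (2*k+2)))

/-- The rabbit at `v` at time `i` can evade for `m` further steps. -/
def Evade (i m : ℕ) (v : Fin (2*k+2)) : Prop :=
  ∃ r : ℕ → Fin (2*k+2), r i = v ∧
    (∀ j, i ≤ j → j < i + m → Padj k (r j) (r (j+1))) ∧
    (∀ j, i ≤ j → j ≤ i + m → r j ∉ Hs j)

/-- The rabbit at `v` at time `i` can evade forever. -/
def Ok (i : ℕ) (v : Fin (2*k+2)) : Prop := ∀ m, Evade k Hs i m v

lemma ok_notmem {i v} (h : Ok k Hs i v) : v ∉ Hs i := by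
  obtain ⟨r, hri, -, hev⟩ := h 0
  have := hev i le_rfl (by omega)
  rwa [hri] at this

lemma ok_step {i v} (h : Ok k Hs i v) :
    ∃ u, Padj k v u ∧ Ok k Hs (i+1) u := by
  classical
  by_contra hcon
  push_neg at hcon
  set f : Fin (2*k+2) → ℕ := fun u =>
    if hE : ∃ m, ¬ Evade k Hs (i+1) m u then Nat.find hE else 0 with hf
  set M := Finset.univ.sup f with hMdef
  obtain ⟨r, hri, hadj, hev⟩ := h (M + 1)
  have hadj0 : Padj k v (r (i+1)) := by
    have := hadj i le_rfl (by omega)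
    rwa [hri] at this
  have hnok : ¬ Ok k Hs (i+1) (r (i+1)) := hcon _ hadj0
  have hE : ∃ m, ¬ Evade k Hs (i+1) m (r (i+1)) := by
    rw [Ok] at hnok; push_neg at hnok; exact hnok
  have hfu : f (r (i+1)) = Nat.find hE := by rw [hf]; simp [hE]
  have hle : Nat.find hE ≤ M := by
    rw [← hfu, hMdef]; exact Finset.le_sup (Finset.mem_univ _)
  refine Nat.find_spec hE ⟨r, rfl, ?_, ?_⟩
  · intro j hj1 hj2; exact hadj j (by omega) (by omega)
  · intro j hj1 hj2; exact hev j (by omega) (by omega)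

/-- Against `k` hunters (for `k ≥ 2`) the rabbit escapes forever. -/
lemma exists_evader (hk : 2 ≤ k) (hHs : ∀ i, (Hs i).card ≤ k) :
    ∃ r : ℕ → Fin (2*k+2), RabbitStrategy (PG k) r ∧ ∀ i, r i ∉ Hs i := by
  classical
  -- the forward belief sets
  set Q : ℕ → Finset (Fin (2*k+2)) :=
    fun i => Nat.rec Finset.univ (fun i Qi => (Qi \ Hs i).biUnion (NB k)) i with hQdef
  have hQ0 : Q 0 = Finset.univ := rfl
  have hQs : ∀ i, Q (i+1) = (Q i \ Hs i).biUnion (NB k) := fun _ => rfl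
  have hQcard : ∀ i, k + 2 ≤ (Q i).card := by
    intro i
    induction i with
    | zero => rw [hQ0]; simp; omega
    | succ i ih =>
      have h2 : 2 ≤ (Q i \ Hs i).card := by
        have := Finset.le_card_sdiff (Hs i) (Q i)
        have := hHs i
        omega
      obtain ⟨u, hu, v, hv, huv⟩ := Finset.one_lt_card.mp h2
      have hsub : NB k u ∪ NB k v ⊆ (Q i \ Hs i).biUnion (NB k) := by
        intro x hx
        rw [Finset.mem_union] at hx
        rw [Finset.mem_biUnion]
        rcases hx with hx | hx
        · exact ⟨u, hu, hx⟩
        · exact ⟨v, hv, hx⟩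
      rw [hQs]
      exact le_trans (pair_lemma hk huv) (Finset.card_le_card hsub)
  -- evading walks of every finite length
  have walks : ∀ i, ∀ v ∈ Q i, ∃ r : ℕ → Fin (2*k+2), r i = v ∧
      ∀ j, j < i → Padj k (r j) (r (j+1)) ∧ r j ∉ Hs j := by
    intro i
    induction i with
    | zero => intro v _; exact ⟨fun _ => v, rfl, fun j hj => absurd hj (by omega)⟩
    | succ i ih =>
      intro v hv
      rw [hQs, Finset.mem_biUnion] at hv
      obtain ⟨u, hu, hvu⟩ := hv
      rw [Finset.mem_sdiff] at hu
      obtain ⟨r, hri, hr⟩ := ih u hu.1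
      refine ⟨fun j => if j ≤ i then r j else v, by dsimp only; rw [if_neg (by omega)], ?_⟩
      intro j hj
      dsimp only
      by_cases hji : j < i
      · have e1 : (if j ≤ i then r j else v) = r j := if_pos (by omega)
        have e2 : (if j+1 ≤ i then r (j+1) else v) = r (j+1) := if_pos (by omega)
        rw [e1, e2]
        exact hr j hji
      · have hj' : j = i := by omega
        subst hj'
        have e1 : (if j ≤ j then r j else v) = r j := if_pos le_rfl
        have e2 : (if j+1 ≤ j then r (j+1) else v) = v := if_neg (by omega)
        rw [e1, e2, hri]
        exact ⟨mem_NB.mp hvu, hu.2⟩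
  have evade0 : ∀ m, ∃ r : ℕ → Fin (2*k+2),
      (∀ j, j < m → Padj k (r j) (r (j+1))) ∧ (∀ j, j ≤ m → r j ∉ Hs j) := by
    intro m
    have h2 : 2 ≤ (Q m \ Hs m).card := by
      have := Finset.le_card_sdiff (Hs m) (Q m)
      have := hHs m
      have := hQcard m
      omega
    have hpos : 0 < (Q m \ Hs m).card := by omega
    obtain ⟨v, hv⟩ := Finset.card_pos.mp hpos
    rw [Finset.mem_sdiff] at hv
    obtain ⟨r, hrm, hr⟩ := walks m v hv.1
    refine ⟨r, fun j hj => (hr j hj).1, ?_⟩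
    intro j hj
    rcases Nat.lt_or_ge j m with h | h
    · exact (hr j h).2
    · have : j = m := by omega
      subst this
      rw [hrm]
      exact hv.2
  -- some starting vertex admits arbitrarily long evasions
  have hok0 : ∃ v, Ok k Hs 0 v := by
    set g : ℕ → Fin (2*k+2) := fun m => (evade0 m).choose 0 with hg
    obtain ⟨v, hv⟩ := Finite.exists_infinite_fiber g
    refine ⟨v, fun m => ?_⟩
    obtain ⟨m', hm', hgt⟩ := (Set.infinite_coe_iff.mp hv).exists_gt m
    obtain ⟨hadj, hev⟩ := (evade0 m').choose_spec
    refine ⟨(evade0 m').choose, hm', ?_, ?_⟩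
    · intro j _ hj; exact hadj j (by omega)
    · intro j _ hj; exact hev j (by omega)
  obtain ⟨v0, hv0⟩ := hok0
  -- build the infinite evading walk
  let step : ∀ i, {v // Ok k Hs i v} → {v // Ok k Hs (i+1) v} := fun i p =>
    ⟨(ok_step k Hs p.2).choose, (ok_step k Hs p.2).choose_spec.2⟩
  let F : ∀ i, {v // Ok k Hs i v} := fun i => Nat.rec ⟨v0, hv0⟩ step i
  have hF : ∀ i, F (i+1) = step i (F i) := fun _ => rfl
  refine ⟨fun i => (F i).1, fun i => ?_, fun i => ok_notmem k Hs (F i).2⟩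
  show (PG k).Adj (F i).1 (F (i+1)).1
  have h1 : (F (i+1)).1 = (ok_step k Hs (F i).2).choose := by rw [hF]
  rw [h1]
  exact (ok_step k Hs (F i).2).choose_spec.1

end Evasion

lemma hunterNumber_PG {k : ℕ} (hk : 2 ≤ k) : hunterNumber (PG k) = k + 1 := by
  have hmem : (k+1) ∈ {j | HuntersWin (PG k) j} := hunters_win k
  refine le_antisymm (Nat.sInf_le hmem) (le_csInf ⟨k+1, hmem⟩ ?_)
  intro b hb
  by_contra hlt
  push_neg at hlt
  obtain ⟨Hs, hc, hwin⟩ := hb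
  obtain ⟨r, hr, hev⟩ := exists_evader k Hs hk (fun i => (hc i).trans (by omega))
  obtain ⟨i, hi⟩ := hwin r hr trivial
  exact hev i hi

end HunterTight

/-- For every integer k ≥ 2 there exists a finite simple graph G with pathwidth exactly k
and hunter number h(G) = k + 1; that is, the bound h(G) ≤ pw(G) + 1 is tight for graphs of
pathwidth at least 2. -/
theorem pathwidth_bound_tight (k : ℕ) (hk : 2 ≤ k) :
    ∃ (V : Type) (_ : Fintype V) (G : SimpleGraph V),
      pathwidth G = k ∧ hunterNumber G = k + 1 := by
  exact ⟨Fin (2*k+2), inferInstance, HunterTight.PG k,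
    HunterTight.pathwidth_PG k, HunterTight.hunterNumber_PG hk⟩
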